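/- Let I ⊆ S and I' ⊆ S' = S[x'] be squarefree monomial ideals as follows: I is minimally generated by M = {m_1,…,m_p, x n_1,…,x n_q} where x is a distinguished variable of S and the m_i, n_j are distinct monomials not divisible by x; I' is minimally generated by M' = M ∪ {x' n_1,…,x' n_q}. Then for any subset N ⊆ M, N is a face of the Scarf complex of I if and only if N is a face of the Scarf complex of I'. -/
import Mathlib


/-- A subset `σ` of the minimal generating set `M` (squarefree monomials identified with their
sets of variables, lcm identified with union) is a face of the Scarf complex when its lcm is
unique among subsets of `M` (with `lcm ∅ = 1`). -/
def ScarfFace {α : Type*} [DecidableEq α] (M σ : Finset (Finset α)) : Prop :=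
  σ ⊆ M ∧ ∀ τ ⊆ M, τ.sup id = σ.sup id → τ = σ

/-- leaf-addition setup.  Variables of `S` are elements of `α` other than
`x'`; `S' = S[x']`.  `I` is minimally generated by `M = A ∪ {x·n : n ∈ B}` where the monomials
in `A` and `B` are pairwise distinct and not divisible by `x` (nor by the new variable `x'`),
and `I'` is minimally generated by `M' = M ∪ {x'·n : n ∈ B}`.  Then a subset `N ⊆ M` is a face
of `Scarf(I)` iff it is a face of `Scarf(I')`. -/
theorem scarf_face_iff_after_leaf_addition {α : Type*} [DecidableEq α]
    (x x' : α) (hxx' : x ≠ x') (A B : Finset (Finset α)) (hAB : Disjoint A B)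
    (hA : ∀ m ∈ A, x ∉ m ∧ x' ∉ m) (hB : ∀ n ∈ B, x ∉ n ∧ x' ∉ n)
    (M M' : Finset (Finset α))
    (hM : M = A ∪ B.image (insert x)) (hM' : M' = M ∪ B.image (insert x'))
    (hmin : ∀ a ∈ M', ∀ b ∈ M', a ⊆ b → a = b)
    (N : Finset (Finset α)) (hN : N ⊆ M) :
    ScarfFace M N ↔ ScarfFace M' N := by
  have hx'M : ∀ m ∈ M, x' ∉ m := by
    intro m hm hx'm
    rw [hM, Finset.mem_union] at hm
    rcases hm with h | h
    · exact (hA m h).2 hx'm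
    · rcases Finset.mem_image.mp h with ⟨n, hn, rfl⟩
      rcases Finset.mem_insert.mp hx'm with h' | h'
      · exact hxx' h'.symm
      · exact (hB n hn).2 h'
  constructor
  · rintro ⟨hNM, huniq⟩
    refine ⟨hN.trans (by rw [hM']; exact Finset.subset_union_left), ?_⟩
    intro τ hτ hsup
    have hx'N : x' ∉ N.sup id := by
      intro h
      rcases Finset.mem_sup.mp h with ⟨m, hm, hx'm⟩
      exact hx'M m (hN hm) hx'm
    have hτM : τ ⊆ M := by
      intro t ht
      rcases Finset.mem_union.mp (hM' ▸ hτ ht) with h | h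
      · exact h
      · exfalso
        rcases Finset.mem_image.mp h with ⟨n, hn, rfl⟩
        exact hx'N (hsup ▸ Finset.mem_sup.mpr ⟨_, ht, Finset.mem_insert_self _ _⟩)
    exact huniq τ hτM hsup
  · rintro ⟨hNM, huniq⟩
    exact ⟨hN, fun τ hτ hsup =>
      huniq τ (hτ.trans (by rw [hM']; exact Finset.subset_union_left)) hsup⟩
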